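/- The free rack FR_n on n generators has HR_0 ≅ ℤ, HR_1 ≅ ℤ^n, and HR_m = 0 for m ≥ 2. -/

import Mathlib

/-- Rack chains: free abelian group on `n`-tuples. -/
abbrev CR (X : Type) (n : ℕ) : Type := (Fin n → X) →₀ ℤ

/-- The monomial basis element. -/
noncomputable def mon {X : Type} {n : ℕ} (w : Fin n → X) : CR X n := Finsupp.single w 1

/-- Delete the `(i+1)`-st entry (1-indexed `k = i+1`). -/
def del {X : Type} {n : ℕ} (w : Fin (n+1) → X) (i : Fin n) : Fin n → X :=
  fun j => if (j : ℕ) < (i : ℕ) then w j.castSucc else w j.succ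

/-- Delete the `(i+1)`-st entry and act with it on all later entries. -/
def act {X : Type} (op : X → X → X) {n : ℕ} (w : Fin (n+1) → X) (i : Fin n) : Fin n → X :=
  fun j => if (j : ℕ) < (i : ℕ) then w j.castSucc else op (w i.castSucc) (w j.succ)

/-- Rack differential on a monomial. -/
noncomputable def dMon {X : Type} (op : X → X → X) {n : ℕ} (w : Fin (n+1) → X) : CR X n :=
  ∑ i : Fin n, ((-1 : ℤ) ^ (i : ℕ)) • (mon (del w i) - mon (act op w i))

/-- The rack differential `CR_{n+1} → CR_n`. -/
noncomputable def d {X : Type} (op : X → X → X) (n : ℕ) : CR X (n+1) →+ CR X n :=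
  Finsupp.liftAddHom fun w => zmultiplesHom _ (dMon op w)

/-- Left concatenation `w ↦ x·w`. -/
noncomputable def consHom {X : Type} (x : X) (n : ℕ) : CR X n →+ CR X (n+1) :=
  Finsupp.liftAddHom fun w => zmultiplesHom _ (mon (Fin.cons x w))

/-- Diagonal action of a map `φ` on chains. -/
noncomputable def mapChains {X : Type} (φ : X → X) (n : ℕ) : CR X n →+ CR X n :=
  Finsupp.liftAddHom fun w => zmultiplesHom _ (mon (φ ∘ w))

/-- Cycles. -/
noncomputable def ZC {X : Type} (op : X → X → X) : (n : ℕ) → AddSubgroup (CR X n)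
  | 0 => ⊤
  | (m+1) => (d op m).ker

/-- Boundaries. -/
noncomputable def BC {X : Type} (op : X → X → X) (n : ℕ) : AddSubgroup (CR X n) :=
  (d op n).range

/-- Rack homology. -/
abbrev HR (X : Type) (op : X → X → X) (n : ℕ) : Type :=
  ZC op n ⧸ ((BC op n).addSubgroupOf (ZC op n))

/-- The rack operation of a permutation rack. -/
def permOp {X : Type} (φ : X ≃ X) : X → X → X := fun _ y => φ y

/-- Multiplication by an element of `ℤX`. -/
noncomputable def mulChain {X : Type} (v : X →₀ ℤ) (n : ℕ) : CR X n →+ CR X (n+1) :=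
  ∑ x ∈ v.support, v x • consHom x n

/-- The free rack on `n` generators, modelled on `F_n × {x₁,…,x_n}` with
`(u,x) ▷ (w,y) = (uxu⁻¹w, y)`. -/
def freeRackOp (n : ℕ) :
    (FreeGroup (Fin n) × Fin n) → (FreeGroup (Fin n) × Fin n) → (FreeGroup (Fin n) × Fin n) :=
  fun p q => (p.1 * FreeGroup.of p.2 * p.1⁻¹ * q.1, q.2)

section Basic
variable {A : Type} (op : A → A → A) {m : ℕ}

lemma d_mon (w : Fin (m+1) → A) : d op m (mon w) = dMon op w := by
  simp [d, mon, Finsupp.liftAddHom_apply_single]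
lemma cons_mon (x : A) (w : Fin m → A) : consHom x m (mon w) = mon (Fin.cons x w) := by
  simp [consHom, mon, Finsupp.liftAddHom_apply_single]
lemma mapChains_mon (φ : A → A) (w : Fin m → A) : mapChains φ m (mon w) = mon (φ ∘ w) := by
  simp [mapChains, mon, Finsupp.liftAddHom_apply_single]
lemma chainHom_ext {N : Type*} [AddCommGroup N] {f g : CR A m →+ N}
    (h : ∀ w : Fin m → A, f (mon w) = g (mon w)) : f = g :=
  Finsupp.addHom_ext fun w z => by
    have : (Finsupp.single w z : CR A m) = z • mon w := by simp [mon]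
    rw [this, map_zsmul, map_zsmul, h]

lemma del_zero (w : Fin (m+2) → A) : del w (0 : Fin (m+1)) = Fin.tail w := by
  funext j; simp [del, Fin.tail]

lemma act_zero (w : Fin (m+2) → A) : act op w (0 : Fin (m+1)) = op (w 0) ∘ Fin.tail w := by
  funext j; simp [act, Fin.tail]

lemma del_succ (w : Fin (m+2) → A) (i : Fin m) :
    del w i.succ = Fin.cons (w 0) (del (Fin.tail w) i) := by
  funext j
  induction j using Fin.cases with
  | zero => simp [del]
  | succ j' =>
    simp only [del, Fin.tail, Fin.val_succ, Fin.cons_succ]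
    by_cases h : (j' : ℕ) < (i : ℕ)
    · rw [if_pos (by omega), if_pos h, ← Fin.succ_castSucc]
    · rw [if_neg (by omega), if_neg h]

lemma act_succ (w : Fin (m+2) → A) (i : Fin m) :
    act op w i.succ = Fin.cons (w 0) (act op (Fin.tail w) i) := by
  funext j
  induction j using Fin.cases with
  | zero => simp [act]
  | succ j' =>
    simp only [act, Fin.tail, Fin.val_succ, Fin.cons_succ]
    by_cases h : (j' : ℕ) < (i : ℕ)
    · rw [if_pos (by omega), if_pos h, ← Fin.succ_castSucc]
    · rw [if_neg (by omega), if_neg h, ← Fin.succ_castSucc]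

lemma dMon_decomp (w : Fin (m+2) → A) :
    dMon op w = mon (Fin.tail w) - mon (op (w 0) ∘ Fin.tail w)
      - consHom (w 0) m (dMon op (Fin.tail w)) := by
  have key : ∀ i : Fin m,
      ((-1:ℤ) ^ ((i.succ : Fin (m+1)) : ℕ)) • (mon (del w i.succ) - mon (act op w i.succ))
      = -(((-1:ℤ) ^ (i:ℕ)) • (consHom (w 0) m (mon (del (Fin.tail w) i) - mon (act op (Fin.tail w) i)))) := by
    intro i
    rw [del_succ, act_succ, Fin.val_succ, pow_succ, map_sub, cons_mon, cons_mon,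
      mul_comm, mul_smul, neg_one_zsmul]
  rw [dMon, Fin.sum_univ_succ, del_zero, act_zero]
  simp only [Fin.val_zero, pow_zero, one_smul]
  rw [Finset.sum_congr rfl (fun i _ => key i)]
  rw [dMon, map_sum]
  simp only [map_zsmul, map_sub, cons_mon, Finset.sum_neg_distrib]
  abel

lemma d_cons (x : A) (c : CR A (m+1)) :
    d op (m+1) (consHom x (m+1) c)
      = c - mapChains (op x) (m+1) c - consHom x m (d op m c) := by
  have : (d op (m+1)).comp (consHom x (m+1))
      = AddMonoidHom.id _ - mapChains (op x) (m+1) - (consHom x m).comp (d op m) := by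
    apply chainHom_ext
    intro w
    simp only [AddMonoidHom.comp_apply, AddMonoidHom.sub_apply, AddMonoidHom.id_apply]
    rw [cons_mon, d_mon, dMon_decomp, Fin.tail_cons, Fin.cons_zero, mapChains_mon, d_mon]
  have := congrArg (fun f => f c) this
  simpa using this

section RackHom
variable (φ : A → A)

lemma del_comp (w : Fin (m+1) → A) (i : Fin m) : del (φ ∘ w) i = φ ∘ del w i := by
  funext j; simp only [del, Function.comp]; split <;> rfl

lemma act_comp (hφ : ∀ a b, op (φ a) (φ b) = φ (op a b)) (w : Fin (m+1) → A) (i : Fin m) : act op (φ ∘ w) i = φ ∘ act op w i := by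
  funext j; simp only [act, Function.comp]; split
  · rfl
  · rw [hφ]

lemma dMon_comp (hφ : ∀ a b, op (φ a) (φ b) = φ (op a b)) (w : Fin (m+1) → A) :
    dMon op (φ ∘ w) = mapChains φ m (dMon op w) := by
  rw [dMon, dMon, map_sum]
  refine Finset.sum_congr rfl fun i _ => ?_
  rw [map_zsmul, map_sub, mapChains_mon, mapChains_mon, del_comp, act_comp op φ hφ]

lemma d_mapChains (hφ : ∀ a b, op (φ a) (φ b) = φ (op a b)) (c : CR A (m+1)) :
    d op m (mapChains φ (m+1) c) = mapChains φ m (d op m c) := by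
  have : (d op m).comp (mapChains φ (m+1)) = (mapChains φ m).comp (d op m) := by
    apply chainHom_ext
    intro w
    simp only [AddMonoidHom.comp_apply]
    rw [mapChains_mon, d_mon, d_mon, dMon_comp op φ hφ]
  exact congrArg (fun f => f c) this

end RackHom

lemma mapChains_comp (φ ψ : A → A) (c : CR A m) :
    mapChains φ m (mapChains ψ m c) = mapChains (φ ∘ ψ) m c := by
  have : (mapChains φ m).comp (mapChains ψ m) = mapChains (φ ∘ ψ) m := by
    apply chainHom_ext
    intro w
    simp only [AddMonoidHom.comp_apply]
    rw [mapChains_mon, mapChains_mon, mapChains_mon, Function.comp_assoc]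
  exact congrArg (fun f => f c) this

lemma mapChains_id (c : CR A m) : mapChains id m c = c := by
  have : mapChains (id : A → A) m = AddMonoidHom.id _ := by
    apply chainHom_ext
    intro w
    rw [mapChains_mon, AddMonoidHom.id_apply, Function.id_comp]
  exact congrArg (fun f => f c) this

lemma mapChains_eq_mapDomain (φ : A → A) (c : CR A m) :
    mapChains φ m c = Finsupp.mapDomain (fun w => φ ∘ w) c := by
  have : mapChains φ m = Finsupp.mapDomain.addMonoidHom (fun w : Fin m → A => φ ∘ w) := by
    apply chainHom_ext
    intro w
    rw [mapChains_mon, Finsupp.mapDomain.addMonoidHom_apply,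
      show (mon w : CR A m) = Finsupp.single w 1 from rfl, Finsupp.mapDomain_single]
    rfl
  rw [this, Finsupp.mapDomain.addMonoidHom_apply]

end Basic

namespace FRH

abbrev FG (n : ℕ) := FreeGroup (Fin n)
abbrev XX (n : ℕ) := FG n × Fin n

variable {n : ℕ}

/-- left translation -/
def lm (u : FG n) : XX n → XX n := fun p => (u * p.1, p.2)

lemma lm_one : lm (1 : FG n) = id := by funext p; simp [lm]

lemma lm_comp (u v : FG n) : lm u ∘ lm v = lm (u * v) := by
  funext p; simp [lm, mul_assoc]

lemma lm_injective (u : FG n) : Function.Injective (lm u) := by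
  intro p q h
  have h1 := congrArg Prod.fst h
  have h2 := congrArg Prod.snd h
  simp only [lm] at h1 h2
  exact Prod.ext (mul_left_cancel h1) h2

lemma op_eq_lm (x : XX n) : freeRackOp n x = lm (x.1 * FreeGroup.of x.2 * x.1⁻¹) := rfl

lemma op_one_gen (t : Fin n) : freeRackOp n ((1 : FG n), t) = lm (FreeGroup.of t) := by
  rw [op_eq_lm]; simp

lemma op_lm_hom (u : FG n) (a b : XX n) :
    freeRackOp n (lm u a) (lm u b) = lm u (freeRackOp n a b) := by
  simp only [freeRackOp, lm, mul_inv_rev]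
  refine Prod.ext ?_ rfl
  group

end FRH

namespace FRH
variable {n : ℕ}

noncomputable def nu (k : ℕ) : CR (XX n) (k+1) →+ (Fin n → CR (XX n) k) :=
  Finsupp.liftAddHom fun w => zmultiplesHom _ (Pi.single (w 0).2 (mon (lm (w 0).1⁻¹ ∘ Fin.tail w)))

lemma nu_mon (k : ℕ) (w : Fin (k+1) → XX n) :
    nu k (mon w) = Pi.single (w 0).2 (mon (lm (w 0).1⁻¹ ∘ Fin.tail w)) := by
  simp [nu, mon, Finsupp.liftAddHom_apply_single]

noncomputable def pmap {M N : Type} [AddCommGroup M] [AddCommGroup N] (f : M →+ N) :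
    (Fin n → M) →+ (Fin n → N) where
  toFun g := fun t => f (g t)
  map_zero' := by funext t; simp
  map_add' a b := by funext t; simp

lemma pmap_apply {M N : Type} [AddCommGroup M] [AddCommGroup N] (f : M →+ N)
    (g : Fin n → M) (t : Fin n) : pmap f g t = f (g t) := rfl

lemma pmap_single {M N : Type} [AddCommGroup M] [AddCommGroup N] (f : M →+ N)
    (i : Fin n) (x : M) : pmap f (Pi.single i x) = Pi.single i (f x) := by
  funext t
  by_cases h : t = i
  · subst h; simp [pmap_apply]
  · rw [pmap_apply, Pi.single_eq_of_ne h, Pi.single_eq_of_ne h, map_zero]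

lemma nu_cons (k : ℕ) (x : XX n) (c : CR (XX n) k) :
    nu k (consHom x k c) = Pi.single x.2 (mapChains (lm x.1⁻¹) k c) := by
  have : (nu k).comp (consHom x k)
      = (AddMonoidHom.single (fun _ : Fin n => CR (XX n) k) x.2).comp (mapChains (lm x.1⁻¹) k) := by
    apply chainHom_ext
    intro w
    simp only [AddMonoidHom.comp_apply, AddMonoidHom.single_apply]
    rw [cons_mon, nu_mon, Fin.cons_zero, Fin.tail_cons, mapChains_mon]
  have := congrArg (fun f => f c) this
  simpa using this

lemma tail_comp {B C : Type} {k : ℕ} (f : B → C) (w : Fin (k+1) → B) :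
    Fin.tail (f ∘ w) = f ∘ Fin.tail w := rfl

lemma nu_d (k : ℕ) (c : CR (XX n) (k+2)) :
    nu k (d (freeRackOp n) (k+1) c) = fun t => - d (freeRackOp n) k (nu (k+1) c t) := by
  have key : (nu k).comp (d (freeRackOp n) (k+1)) = -((pmap (d (freeRackOp n) k)).comp (nu (k+1))) := by
    apply chainHom_ext
    intro w
    simp only [AddMonoidHom.comp_apply, AddMonoidHom.neg_apply]
    rw [d_mon, dMon_decomp, map_sub, map_sub, nu_cons, nu_mon, nu_mon, nu_mon, pmap_single]
    have e2 : (Fin.tail w 0).2 = ((freeRackOp n (w 0) ∘ Fin.tail w) 0).2 := rfl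
    have e1 : lm ((freeRackOp n (w 0) ∘ Fin.tail w) 0).1⁻¹ ∘ Fin.tail (freeRackOp n (w 0) ∘ Fin.tail w)
        = lm (Fin.tail w 0).1⁻¹ ∘ Fin.tail (Fin.tail w) := by
      funext j
      simp only [Function.comp, Fin.tail, freeRackOp, lm]
      refine Prod.ext ?_ rfl
      show (_ : FG n) * _ = _ * _
      group
    rw [← e2, e1, sub_self, zero_sub]
    rw [d_mon, dMon_comp (freeRackOp n) (lm (w 0).1⁻¹) (op_lm_hom _)]
  have := congrArg (fun f => f c) key
  exact this

noncomputable def theta (k : ℕ) : (Fin n → CR (XX n) k) →+ CR (XX n) k :=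
  ∑ t : Fin n, (AddMonoidHom.id _ - mapChains (lm (FreeGroup.of t)) k).comp
    (Pi.evalAddMonoidHom (fun _ => CR (XX n) k) t)

lemma theta_apply (k : ℕ) (γ : Fin n → CR (XX n) k) :
    theta k γ = ∑ t : Fin n, (γ t - mapChains (lm (FreeGroup.of t)) k (γ t)) := by
  rw [theta, AddMonoidHom.finset_sum_apply]
  rfl

end FRH

namespace FRH
variable {n : ℕ}

noncomputable def iota (k : ℕ) : (Fin n → CR (XX n) k) →+ CR (XX n) (k+1) :=
  ∑ t : Fin n, (consHom ((1 : FG n), t) k).comp (Pi.evalAddMonoidHom (fun _ => CR (XX n) k) t)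

lemma iota_apply (k : ℕ) (γ : Fin n → CR (XX n) k) :
    iota k γ = ∑ t : Fin n, consHom ((1 : FG n), t) k (γ t) := by
  rw [iota, AddMonoidHom.finset_sum_apply]; rfl

lemma iota_single (k : ℕ) (y : Fin n) (c : CR (XX n) k) :
    iota k (Pi.single y c) = consHom ((1 : FG n), y) k c := by
  rw [iota_apply]
  rw [Finset.sum_eq_single y]
  · rw [Pi.single_eq_same]
  · intro s _ hs
    rw [Pi.single_eq_of_ne hs, map_zero]
  · intro h; exact absurd (Finset.mem_univ y) h

lemma theta_single (k : ℕ) (y : Fin n) (c : CR (XX n) k) :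
    theta k (Pi.single y c) = c - mapChains (lm (FreeGroup.of y)) k c := by
  rw [theta_apply]
  rw [Finset.sum_eq_single y]
  · rw [Pi.single_eq_same]
  · intro s _ hs
    rw [Pi.single_eq_of_ne hs, map_zero, sub_zero]
  · intro h; exact absurd (Finset.mem_univ y) h

lemma translate_mem_range (k : ℕ) (u : FG n) (c : CR (XX n) k) :
    mapChains (lm u) k c - c ∈ (theta k).range := by
  induction u using FreeGroup.induction_on generalizing c with
  | C1 => rw [lm_one, mapChains_id, sub_self]; exact zero_mem _
  | of t =>
    show mapChains (lm (FreeGroup.of t)) k c - c ∈ (theta k).range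
    have : mapChains (lm (FreeGroup.of t)) k c - c = -(theta k (Pi.single t c)) := by
      rw [theta_single, neg_sub]
    rw [this]
    exact neg_mem ⟨Pi.single t c, rfl⟩
  | inv_of t ih =>
    show mapChains (lm (FreeGroup.of t)⁻¹) k c - c ∈ (theta k).range
    replace ih : ∀ c : CR (XX n) k, mapChains (lm (FreeGroup.of t)) k c - c ∈ (theta k).range := ih
    have e : mapChains (lm (FreeGroup.of t)) k (mapChains (lm (FreeGroup.of t)⁻¹) k c) = c := by
      rw [mapChains_comp, lm_comp, mul_inv_cancel, lm_one, mapChains_id]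
    have : mapChains (lm (FreeGroup.of t)⁻¹) k c - c
        = -(mapChains (lm (FreeGroup.of t)) k (mapChains (lm (FreeGroup.of t)⁻¹) k c)
            - mapChains (lm (FreeGroup.of t)⁻¹) k c) := by
      rw [e, neg_sub]
    rw [this]
    exact neg_mem (ih _)
  | mul u v ihu ihv =>
    have : mapChains (lm (u * v)) k c - c
        = (mapChains (lm u) k (mapChains (lm v) k c) - mapChains (lm v) k c)
          + (mapChains (lm v) k c - c) := by
      rw [mapChains_comp, lm_comp]; abel
    rw [this]
    exact add_mem (ihu _) (ihv _)

lemma span_lemma (k : ℕ) (c : CR (XX n) (k+1)) :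
    c - iota k (nu k c) ∈ (theta (k+1)).range := by
  have hmon : ∀ w : Fin (k+1) → XX n, mon w - iota k (nu k (mon w)) ∈ (theta (k+1)).range := by
    intro w
    rw [nu_mon, iota_single, cons_mon]
    set V : Fin (k+1) → XX n := Fin.cons ((1 : FG n), (w 0).2) (lm (w 0).1⁻¹ ∘ Fin.tail w) with hV
    have hw : w = lm (w 0).1 ∘ V := by
      funext j
      induction j using Fin.cases with
      | zero =>
        show w 0 = lm (w 0).1 ((1 : FG n), (w 0).2)
        simp [lm]
      | succ j' =>
        show w j'.succ = lm (w 0).1 (lm (w 0).1⁻¹ (Fin.tail w j'))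
        simp [lm, Fin.tail]
    have : mon w - mon V = mapChains (lm (w 0).1) (k+1) (mon V) - mon V := by
      rw [mapChains_mon, ← hw]
    rw [this]
    exact translate_mem_range (k+1) _ _
  induction c using Finsupp.induction with
  | zero => simp only [map_zero, sub_zero]; exact zero_mem _
  | single_add w z f hwf hz ih =>
    have : (Finsupp.single w z + f) - iota k (nu k (Finsupp.single w z + f))
        = z • (mon w - iota k (nu k (mon w))) + (f - iota k (nu k f)) := by
      have hsingle : (Finsupp.single w z : CR (XX n) (k+1)) = z • mon w := by simp [mon]
      rw [hsingle, map_add, map_add, map_zsmul, map_zsmul]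
      rw [smul_sub]
      abel
    rw [this]
    exact add_mem (zsmul_mem (hmon w) z) ih

end FRH

namespace FRH
variable {n : ℕ}

lemma reduce_cons_of_head (x : Fin n × Bool) (g : FG n)
    (h : g.toWord.head? ≠ some (x.1, !x.2)) :
    FreeGroup.reduce (x :: g.toWord) = x :: g.toWord := by
  rw [FreeGroup.reduce.cons, FreeGroup.reduce_toWord]
  cases hL : g.toWord with
  | nil => rfl
  | cons hd tl =>
    simp only
    rw [if_neg]
    rintro ⟨h1, h2⟩
    apply h
    rw [hL]
    have : hd = (x.1, !x.2) := by
      refine Prod.ext h1.symm ?_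
      rw [h2, Bool.not_not]
    rw [this]
    rfl

lemma len_mk_mul (x : Fin n × Bool) (g : FG n)
    (h : g.toWord.head? ≠ some (x.1, !x.2)) :
    (FreeGroup.mk [x] * g).toWord.length = g.toWord.length + 1 := by
  conv_lhs => rw [← FreeGroup.mk_toWord (x := g)]
  rw [FreeGroup.mul_mk, FreeGroup.toWord_mk]
  have : ([x] ++ g.toWord) = x :: g.toWord := rfl
  rw [this, reduce_cons_of_head x g h, List.length_cons]

lemma of_eq_mk (t : Fin n) : FreeGroup.of t = FreeGroup.mk [(t, true)] := rfl

lemma inv_of_eq_mk (t : Fin n) : (FreeGroup.of t)⁻¹ = FreeGroup.mk [(t, false)] := by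
  rw [of_eq_mk, FreeGroup.inv_mk]
  rfl

lemma len_of_mul (t : Fin n) (g : FG n) (h : g.toWord.head? ≠ some (t, false)) :
    (FreeGroup.of t * g).toWord.length = g.toWord.length + 1 := by
  rw [of_eq_mk]
  exact len_mk_mul (t, true) g h

lemma len_inv_of_mul (t : Fin n) (g : FG n) (h : g.toWord.head? ≠ some (t, true)) :
    ((FreeGroup.of t)⁻¹ * g).toWord.length = g.toWord.length + 1 := by
  rw [inv_of_eq_mk]
  exact len_mk_mul (t, false) g h

lemma tree_lemma (k : ℕ) (γ : Fin n → CR (XX n) (k+1)) (h : theta (k+1) γ = 0) (t : Fin n) :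
    γ t = 0 := by
  classical
  by_contra hne
  set lmW : Fin n → (Fin (k+1) → XX n) → (Fin (k+1) → XX n) :=
    fun s w => lm (FreeGroup.of s) ∘ w with hlmW
  have hinj : ∀ s, Function.Injective (lmW s) := by
    intro s w w' hww
    funext j
    exact lm_injective _ (congrFun hww j)
  set ℓ : (Fin (k+1) → XX n) → ℕ := fun w => ((w 0).1).toWord.length with hℓ
  set T : Finset (Fin (k+1) → XX n) :=
    Finset.univ.biUnion (fun s => (γ s).support ∪ ((γ s).support.image (lmW s))) with hT
  have memT_supp : ∀ s w, w ∈ (γ s).support → w ∈ T := by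
    intro s w hw
    exact Finset.mem_biUnion.mpr ⟨s, Finset.mem_univ s,
      Finset.mem_union_left _ hw⟩
  have memT_img : ∀ s w, w ∈ (γ s).support → lmW s w ∈ T := by
    intro s w hw
    exact Finset.mem_biUnion.mpr ⟨s, Finset.mem_univ s,
      Finset.mem_union_right _ (Finset.mem_image.mpr ⟨w, hw, rfl⟩)⟩
  have hTne : T.Nonempty := by
    obtain ⟨w, hw⟩ := Finsupp.support_nonempty_iff.mpr hne
    exact ⟨w, memT_supp t w hw⟩
  obtain ⟨v, hvT, hvmax⟩ := T.exists_max_image ℓ hTne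
  have claim1 : ∀ s, ((v 0).1).toWord.head? ≠ some (s, false) → γ s v = 0 := by
    intro s hs
    by_contra h0
    have hv : v ∈ (γ s).support := Finsupp.mem_support_iff.mpr h0
    have hle : ℓ (lmW s v) ≤ ℓ v := hvmax _ (memT_img s v hv)
    have heq : ℓ (lmW s v) = ℓ v + 1 := by
      show ((FreeGroup.of s * (v 0).1)).toWord.length = ((v 0).1).toWord.length + 1
      exact len_of_mul s _ hs
    omega
  have claim2 : ∀ s, ((v 0).1).toWord.head? ≠ some (s, true) →
      mapChains (lm (FreeGroup.of s)) (k+1) (γ s) v = 0 := by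
    intro s hs
    rw [mapChains_eq_mapDomain]
    by_cases hr : v ∈ Set.range (lmW s)
    · obtain ⟨w, hw⟩ := hr
      rw [← hw, Finsupp.mapDomain_apply (hinj s)]
      by_contra h0
      have hwsupp : w ∈ (γ s).support := Finsupp.mem_support_iff.mpr h0
      have hle : ℓ w ≤ ℓ v := hvmax _ (memT_supp s w hwsupp)
      have hw0 : (w 0).1 = (FreeGroup.of s)⁻¹ * (v 0).1 := by
        have : (v 0).1 = FreeGroup.of s * (w 0).1 := by rw [← hw]; rfl
        rw [this, inv_mul_cancel_left]
      have heq : ℓ w = ℓ v + 1 := by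
        show ((w 0).1).toWord.length = _
        rw [hw0]
        exact len_inv_of_mul s _ hs
      omega
    · exact Finsupp.mapDomain_notin_range _ _ hr
  have hv0 : ∑ s : Fin n, (γ s v - mapChains (lm (FreeGroup.of s)) (k+1) (γ s) v) = 0 := by
    have h1 : theta (k+1) γ v = 0 := by rw [h]; rfl
    rw [theta_apply, Finsupp.finset_sum_apply] at h1
    simpa [Finsupp.sub_apply] using h1
  have key : ∀ s, γ s v = 0 ∧ mapChains (lm (FreeGroup.of s)) (k+1) (γ s) v = 0 := by
    cases hH : ((v 0).1).toWord.head? with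
    | none =>
      intro s
      exact ⟨claim1 s (by rw [hH]; exact fun h => nomatch h),
        claim2 s (by rw [hH]; exact fun h => nomatch h)⟩
    | some p =>
      obtain ⟨s₀, b⟩ := p
      cases b with
      | false =>
        have hmap : ∀ s, mapChains (lm (FreeGroup.of s)) (k+1) (γ s) v = 0 := by
          intro s
          refine claim2 s ?_
          rw [hH]
          intro hcon
          have := (Option.some_inj.mp hcon)
          exact Bool.noConfusion (congrArg Prod.snd this)
        have hγ : ∀ s, s ≠ s₀ → γ s v = 0 := by
          intro s hss
          refine claim1 s ?_
          rw [hH]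
          intro hcon
          exact hss.symm (congrArg Prod.fst (Option.some_inj.mp hcon))
        have hsum : ∑ s : Fin n, (γ s v - mapChains (lm (FreeGroup.of s)) (k+1) (γ s) v)
            = γ s₀ v := by
          rw [Finset.sum_eq_single s₀]
          · rw [hmap s₀, sub_zero]
          · intro s _ hss; rw [hγ s hss, hmap s, sub_zero]
          · intro hs; exact absurd (Finset.mem_univ s₀) hs
        have hγ0 : γ s₀ v = 0 := by rw [← hsum]; exact hv0
        intro s
        refine ⟨?_, hmap s⟩
        by_cases hss : s = s₀
        · rw [hss]; exact hγ0
        · exact hγ s hss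
      | true =>
        have hγ : ∀ s, γ s v = 0 := by
          intro s
          refine claim1 s ?_
          rw [hH]
          intro hcon
          exact Bool.noConfusion (congrArg Prod.snd (Option.some_inj.mp hcon))
        have hmap' : ∀ s, s ≠ s₀ → mapChains (lm (FreeGroup.of s)) (k+1) (γ s) v = 0 := by
          intro s hss
          refine claim2 s ?_
          rw [hH]
          intro hcon
          exact hss.symm (congrArg Prod.fst (Option.some_inj.mp hcon))
        have hsum : ∑ s : Fin n, (γ s v - mapChains (lm (FreeGroup.of s)) (k+1) (γ s) v)
            = -(mapChains (lm (FreeGroup.of s₀)) (k+1) (γ s₀) v) := by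
          rw [Finset.sum_eq_single s₀]
          · rw [hγ s₀, zero_sub]
          · intro s _ hss; rw [hγ s, hmap' s hss, sub_zero]
          · intro hs; exact absurd (Finset.mem_univ s₀) hs
        have hm0 : mapChains (lm (FreeGroup.of s₀)) (k+1) (γ s₀) v = 0 := by
          have := hv0
          rw [hsum] at this
          exact neg_eq_zero.mp this
        intro s
        refine ⟨hγ s, ?_⟩
        by_cases hss : s = s₀
        · rw [hss]; exact hm0
        · exact hmap' s hss
  rcases Finset.mem_biUnion.mp hvT with ⟨s, -, hvs⟩
  rcases Finset.mem_union.mp hvs with h1 | h2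
  · exact (Finsupp.mem_support_iff.mp h1) (key s).1
  · obtain ⟨w, hw, hweq⟩ := Finset.mem_image.mp h2
    have : mapChains (lm (FreeGroup.of s)) (k+1) (γ s) v = γ s w := by
      rw [mapChains_eq_mapDomain, ← hweq, Finsupp.mapDomain_apply (hinj s)]
    exact (Finsupp.mem_support_iff.mp hw) (by rw [← this]; exact (key s).2)

end FRH

namespace FRH
variable {n : ℕ}

theorem exactness (k : ℕ) (z : CR (XX n) (k+2)) (hz : d (freeRackOp n) (k+1) z = 0) :
    z ∈ (d (freeRackOp n) (k+2)).range := by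
  have hβcycle : ∀ t, d (freeRackOp n) k (nu (k+1) z t) = 0 := by
    have h1 := nu_d k z
    rw [hz, map_zero] at h1
    intro t
    have h2 := congrFun h1 t
    exact neg_eq_zero.mp h2.symm
  obtain ⟨v, hv⟩ := span_lemma (k+1) z
  -- apply d to hv
  have hL : d (freeRackOp n) (k+1) (z - iota (k+1) (nu (k+1) z))
      = -(theta (k+1) (nu (k+1) z)) := by
    rw [map_sub, hz, zero_sub, iota_apply, map_sum]
    rw [theta_apply]
    congr 1
    refine Finset.sum_congr rfl fun t _ => ?_
    rw [d_cons, hβcycle t, map_zero, sub_zero, op_one_gen]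
  have hR : d (freeRackOp n) (k+1) (theta (k+2) v)
      = theta (k+1) (fun t => d (freeRackOp n) (k+1) (v t)) := by
    rw [theta_apply, map_sum, theta_apply]
    refine Finset.sum_congr rfl fun t _ => ?_
    rw [map_sub, d_mapChains (freeRackOp n) (lm (FreeGroup.of t)) (op_lm_hom _)]
  have hzero : theta (k+1) (fun t => nu (k+1) z t + d (freeRackOp n) (k+1) (v t)) = 0 := by
    have : (fun t => nu (k+1) z t + d (freeRackOp n) (k+1) (v t))
        = nu (k+1) z + (fun t => d (freeRackOp n) (k+1) (v t)) := rfl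
    rw [this, map_add]
    have h3 : -(theta (k+1) (nu (k+1) z)) = theta (k+1) (fun t => d (freeRackOp n) (k+1) (v t)) := by
      rw [← hL, ← hR, hv]

    rw [← h3]
    abel
  have hkill : ∀ t, d (freeRackOp n) (k+1) (v t) = -(nu (k+1) z t) := by
    intro t
    have h4 : nu (k+1) z t + d (freeRackOp n) (k+1) (v t) = 0 := tree_lemma k _ hzero t
    exact eq_neg_of_add_eq_zero_right h4
  refine ⟨∑ t : Fin n, consHom ((1 : FG n), t) (k+2) (v t), ?_⟩
  rw [map_sum]
  have hterm : ∀ t ∈ Finset.univ, d (freeRackOp n) (k+2) (consHom ((1 : FG n), t) (k+2) (v t))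
      = (v t - mapChains (lm (FreeGroup.of t)) (k+2) (v t))
        + consHom ((1 : FG n), t) (k+1) (nu (k+1) z t) := by
    intro t _
    rw [d_cons, hkill t, map_neg, op_one_gen]
    abel
  rw [Finset.sum_congr rfl hterm, Finset.sum_add_distrib, ← theta_apply, ← iota_apply, hv]
  abel

end FRH

namespace FRH
variable {n : ℕ}

noncomputable def quotEquiv {G H : Type*} [AddCommGroup G] [AddCommGroup H] {K B : AddSubgroup G}
    (hK : K = ⊤) (π : G →+ H) (hsurj : Function.Surjective π) (hker : π.ker = B) :
    (K ⧸ B.addSubgroupOf K) ≃+ H := by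
  let φ : K →+ H := π.comp K.subtype
  have hφker : φ.ker = B.addSubgroupOf K := by
    ext x
    simp only [φ, AddMonoidHom.mem_ker, AddMonoidHom.comp_apply, AddSubgroup.coe_subtype,
      AddSubgroup.mem_addSubgroupOf, ← hker]
  have hφsurj : Function.Surjective φ := by
    intro h
    obtain ⟨g, hg⟩ := hsurj h
    exact ⟨⟨g, hK ▸ AddSubgroup.mem_top g⟩, hg⟩
  exact (QuotientAddGroup.quotientAddEquivOfEq hφker.symm).trans
    (QuotientAddGroup.quotientKerEquivOfSurjective φ hφsurj)

lemma d_zero_hom {A : Type} (op : A → A → A) : d op 0 = (0 : CR A 1 →+ CR A 0) := by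
  apply chainHom_ext
  intro w
  rw [d_mon]
  show dMon op w = 0
  rw [dMon]
  simp

lemma translate_mem (k : ℕ) (S : AddSubgroup (CR (XX n) k))
    (hgen : ∀ (t : Fin n) (c : CR (XX n) k), mapChains (lm (FreeGroup.of t)) k c - c ∈ S)
    (u : FG n) (c : CR (XX n) k) : mapChains (lm u) k c - c ∈ S := by
  induction u using FreeGroup.induction_on generalizing c with
  | C1 => rw [lm_one, mapChains_id, sub_self]; exact zero_mem _
  | of t => exact hgen t c
  | inv_of t ih =>
    show mapChains (lm (FreeGroup.of t)⁻¹) k c - c ∈ S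
    replace ih : ∀ c : CR (XX n) k, mapChains (lm (FreeGroup.of t)) k c - c ∈ S := ih
    have e : mapChains (lm (FreeGroup.of t)) k (mapChains (lm (FreeGroup.of t)⁻¹) k c) = c := by
      rw [mapChains_comp, lm_comp, mul_inv_cancel, lm_one, mapChains_id]
    have : mapChains (lm (FreeGroup.of t)⁻¹) k c - c
        = -(mapChains (lm (FreeGroup.of t)) k (mapChains (lm (FreeGroup.of t)⁻¹) k c)
            - mapChains (lm (FreeGroup.of t)⁻¹) k c) := by
      rw [e, neg_sub]
    rw [this]
    exact neg_mem (ih _)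
  | mul u v ihu ihv =>
    have : mapChains (lm (u * v)) k c - c
        = (mapChains (lm u) k (mapChains (lm v) k c) - mapChains (lm v) k c)
          + (mapChains (lm v) k c - c) := by
      rw [mapChains_comp, lm_comp]; abel
    rw [this]
    exact add_mem (ihu _) (ihv _)

/-- the 0-th homology -/
noncomputable def hr0equiv : HR (XX n) (freeRackOp n) 0 ≃+ ℤ := by
  refine quotEquiv (K := ZC (freeRackOp n) 0) (B := BC (freeRackOp n) 0) rfl
    (Finsupp.applyAddHom (fun j => j.elim0 : Fin 0 → XX n)) ?_ ?_
  · intro z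
    refine ⟨Finsupp.single (fun j => j.elim0) z, ?_⟩
    simp [Finsupp.applyAddHom]
  · have hsub : Subsingleton (Fin 0 → XX n) := ⟨fun a b => funext fun j => j.elim0⟩
    have h1 : (Finsupp.applyAddHom (fun j => j.elim0 : Fin 0 → XX n) : CR (XX n) 0 →+ ℤ).ker = ⊥ := by
      ext f
      simp only [AddMonoidHom.mem_ker, Finsupp.applyAddHom_apply, AddSubgroup.mem_bot]
      constructor
      · intro hf
        refine Finsupp.ext fun w => ?_
        rw [hsub.elim w (fun j => j.elim0)]
        exact hf
      · intro hf; rw [hf]; rfl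
    have h2 : BC (freeRackOp n) 0 = (⊥ : AddSubgroup (CR (XX n) 0)) := by
      show (d (freeRackOp n) 0).range = ⊥
      rw [d_zero_hom]
      ext c
      simp only [AddMonoidHom.mem_range, AddSubgroup.mem_bot]
      constructor
      · rintro ⟨w, rfl⟩; rfl
      · intro hc; exact ⟨0, by rw [map_zero, hc]⟩
    rw [h1, h2]

def cw (t : Fin n) : Fin 1 → XX n := fun _ => ((1 : FG n), t)

noncomputable def pi1 : CR (XX n) 1 →+ (Fin n → ℤ) :=
  Finsupp.liftAddHom fun w => zmultiplesHom _ (Pi.single (w 0).2 (1 : ℤ))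

lemma pi1_single (w : Fin 1 → XX n) (z : ℤ) :
    pi1 (Finsupp.single w z) = Pi.single (w 0).2 z := by
  rw [pi1, Finsupp.liftAddHom_apply_single, zmultiplesHom_apply]
  funext s
  by_cases hs : s = (w 0).2
  · subst hs; simp
  · simp [Pi.single_eq_of_ne hs]

lemma pi1_mon (w : Fin 1 → XX n) : pi1 (mon w) = Pi.single (w 0).2 1 := pi1_single w 1

lemma d1_mon (w : Fin 2 → XX n) :
    d (freeRackOp n) 1 (mon w)
      = mon (Fin.tail w) - mon (freeRackOp n (w 0) ∘ Fin.tail w) := by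
  rw [d_mon, dMon, Fin.sum_univ_one]
  rw [show ((0 : Fin 1) : ℕ) = 0 from rfl, pow_zero, one_smul, del_zero, act_zero]

lemma pi1_surj : Function.Surjective (pi1 (n := n)) := by
  intro c
  refine ⟨∑ t : Fin n, Finsupp.single (cw t) (c t), ?_⟩
  rw [map_sum]
  have h : ∀ t ∈ Finset.univ, pi1 (Finsupp.single (cw t) (c t)) = Pi.single t (c t) := by
    intro t _
    rw [pi1_single]
    rfl
  rw [Finset.sum_congr rfl h, Finset.univ_sum_single]

lemma pi1_ker : (pi1 (n := n)).ker = (d (freeRackOp n) 1).range := by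
  have hcomp : (pi1 (n := n)).comp (d (freeRackOp n) 1) = 0 := by
    apply chainHom_ext
    intro w
    rw [AddMonoidHom.comp_apply, d1_mon, map_sub, pi1_mon, pi1_mon]
    have : ((freeRackOp n (w 0) ∘ Fin.tail w) 0).2 = (Fin.tail w 0).2 := rfl
    rw [this, sub_self, AddMonoidHom.zero_apply]
  have hgen : ∀ (t : Fin n) (c : CR (XX n) 1),
      mapChains (lm (FreeGroup.of t)) 1 c - c ∈ (d (freeRackOp n) 1).range := by
    intro t c
    have : mapChains (lm (FreeGroup.of t)) 1 c - c
        = -(d (freeRackOp n) 1 (consHom ((1 : FG n), t) 1 c)) := by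
      rw [d_cons, d_zero_hom, AddMonoidHom.zero_apply, map_zero, sub_zero, op_one_gen, neg_sub]
    rw [this]
    exact neg_mem ⟨_, rfl⟩
  have key : ∀ c : CR (XX n) 1,
      c - ∑ t : Fin n, Finsupp.single (cw t) (pi1 c t) ∈ (d (freeRackOp n) 1).range := by
    intro c
    induction c using Finsupp.induction with
    | zero =>
      have h00 : (0 : CR (XX n) 1) - ∑ t : Fin n, Finsupp.single (cw t) (pi1 (0 : CR (XX n) 1) t)
          = 0 := by simp
      rw [h00]; exact zero_mem _
    | single_add w z f hwf hz ih =>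
      have hsplit : (Finsupp.single w z + f) - ∑ t : Fin n, Finsupp.single (cw t) (pi1 (Finsupp.single w z + f) t)
          = (Finsupp.single w z - ∑ t : Fin n, Finsupp.single (cw t) (pi1 (Finsupp.single w z) t))
            + (f - ∑ t : Fin n, Finsupp.single (cw t) (pi1 f t)) := by
        simp only [map_add, Pi.add_apply, Finsupp.single_add]
        rw [Finset.sum_add_distrib]
        abel
      rw [hsplit]
      refine add_mem ?_ ih
      have hsum : ∑ t : Fin n, Finsupp.single (cw t) (pi1 (Finsupp.single w z) t)
          = Finsupp.single (cw (w 0).2) z := by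
        rw [pi1_single]
        rw [Finset.sum_eq_single ((w 0).2)]
        · rw [Pi.single_eq_same]
        · intro s _ hs; rw [Pi.single_eq_of_ne hs, Finsupp.single_zero]
        · intro hs; exact absurd (Finset.mem_univ _) hs
      rw [hsum]
      have hz1 : (Finsupp.single w z : CR (XX n) 1) - Finsupp.single (cw (w 0).2) z
          = z • (mon w - mon (cw (w 0).2)) := by
        rw [smul_sub]
        simp [mon, Finsupp.smul_single]
      rw [hz1]
      refine zsmul_mem ?_ z
      have hmoneq : mon w = mapChains (lm (w 0).1) 1 (mon (cw (w 0).2)) := by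
        rw [mapChains_mon]
        congr 1
        funext j
        rw [Subsingleton.elim j 0]
        show w 0 = lm (w 0).1 ((1 : FG n), (w 0).2)
        simp [lm]
      rw [hmoneq]
      exact translate_mem 1 _ hgen _ _
  ext f
  simp only [AddMonoidHom.mem_ker, AddMonoidHom.mem_range]
  constructor
  · intro hf
    have := key f
    rw [hf] at this
    simpa using this
  · rintro ⟨c, rfl⟩
    exact congrArg (fun g => g c) hcomp

noncomputable def hr1equiv : HR (XX n) (freeRackOp n) 1 ≃+ (Fin n → ℤ) := by
  refine quotEquiv ?_ pi1 pi1_surj pi1_ker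
  show (d (freeRackOp n) 0).ker = ⊤
  rw [d_zero_hom]
  ext c
  simp [AddMonoidHom.mem_ker]

theorem hr_subsingleton (m : ℕ) (hm : 2 ≤ m) :
    Subsingleton (HR (XX n) (freeRackOp n) m) := by
  obtain ⟨k, rfl⟩ : ∃ k, m = k + 2 := ⟨m - 2, by omega⟩
  constructor
  intro a b
  obtain ⟨x, rfl⟩ := QuotientAddGroup.mk'_surjective _ a
  obtain ⟨y, rfl⟩ := QuotientAddGroup.mk'_surjective _ b
  rw [QuotientAddGroup.mk'_eq_mk']
  refine ⟨-x + y, ?_, by abel⟩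
  have hx : d (freeRackOp n) (k+1) ((x : CR (XX n) (k+2))) = 0 := x.2
  have hy : d (freeRackOp n) (k+1) ((y : CR (XX n) (k+2))) = 0 := y.2
  have hcyc : d (freeRackOp n) (k+1) ((-x + y : ZC (freeRackOp n) (k+2)) : CR (XX n) (k+2)) = 0 := by
    push_cast
    rw [map_add, map_neg, hx, hy]
    abel
  have := exactness k _ hcyc
  exact this

end FRH


/-- The free rack on `n` generators has `HR_0 ≅ ℤ`, `HR_1 ≅ ℤ^n`, and `HR_m = 0` for
`m ≥ 2`. -/
theorem free_rack_homology (n : ℕ) :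
    Nonempty (HR (FreeGroup (Fin n) × Fin n) (freeRackOp n) 0 ≃+ ℤ) ∧
      Nonempty (HR (FreeGroup (Fin n) × Fin n) (freeRackOp n) 1 ≃+ (Fin n → ℤ)) ∧
      ∀ m : ℕ, 2 ≤ m → Subsingleton (HR (FreeGroup (Fin n) × Fin n) (freeRackOp n) m) := by
  exact ⟨⟨FRH.hr0equiv⟩, ⟨FRH.hr1equiv⟩, fun m hm => FRH.hr_subsingleton m hm⟩
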